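/- arXiv:2311.08522 — 2 statements merged into one kernel-verified Lean document; each statement's English description precedes it below -/
import Mathlib

section
/- Let g, h : ℂ² → ℂ be holomorphic. Define F : ℂ⁴ → ℍ(ℂ) by F(t_0,t_1,t_2,t_3) := g(z_2,z_3) e_1 + h(z_1,z_4) e_2 + ( z_3 ∂h/∂w_1(z_1,z_4) + z_2 ∂h/∂w_2(z_1,z_4) ) e_3 + ( z_4 ∂g/∂w_1(z_2,z_3) + z_1 ∂g/∂w_2(z_2,z_3) ) e_4, where z_1 = t_0 − i t_1, z_2 = t_0 + i t_1, z_3 = −i t_2 − t_3, z_4 = −i t_2 + t_3. Then F satisfies the Cauchy–Fueter type equation ∂F/∂t_0 + I ∂F/∂t_1 + J ∂F/∂t_2 + K ∂F/∂t_3 = 0 on ℂ⁴. -/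
noncomputable section

open Quaternion

/-- The quaternion units in the complex quaternion algebra ℍ(ℂ). -/
def qI : ℍ[ℂ] := ⟨0, 1, 0, 0⟩
def qJ : ℍ[ℂ] := ⟨0, 0, 1, 0⟩
def qK : ℍ[ℂ] := ⟨0, 0, 0, 1⟩

/-- The Cartan basis `e₁, e₂, e₃, e₄` of ℍ(ℂ) (indexed from 0). -/
def ee : Fin 4 → ℍ[ℂ] :=
  ![(2⁻¹ : ℂ) • (1 + Complex.I • qI),
    (2⁻¹ : ℂ) • (1 - Complex.I • qI),
    (2⁻¹ : ℂ) • (Complex.I • qJ - qK),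
    (2⁻¹ : ℂ) • (Complex.I • qJ + qK)]

/-- Componentwise complex partial derivative `∂u/∂z_j` for `u : ℂ⁴ → ℂ`. -/
def pd (j : Fin 4) (u : (Fin 4 → ℂ) → ℂ) (z : Fin 4 → ℂ) : ℂ :=
  fderiv ℂ u z (Pi.single j 1)

/-- Componentwise partial derivative `∂f/∂z_j` of the ℍ(ℂ)-valued function
with Cartan components `f 0, f 1, f 2, f 3`. -/
def Dc (f : Fin 4 → (Fin 4 → ℂ) → ℂ) (j : Fin 4) (z : Fin 4 → ℂ) : ℍ[ℂ] :=
  ∑ k, pd j (f k) z • ee k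

/-- Complex partial derivative in the first argument of `u : ℂ² → ℂ`. -/
def pda (u : ℂ × ℂ → ℂ) (p : ℂ × ℂ) : ℂ := fderiv ℂ u p (1, 0)

/-- Complex partial derivative in the second argument of `u : ℂ² → ℂ`. -/
def pdb (u : ℂ × ℂ → ℂ) (p : ℂ × ℂ) : ℂ := fderiv ℂ u p (0, 1)

/-- The change of variables `z₁ = t₀ - i t₁, z₂ = t₀ + i t₁, z₃ = -i t₂ - t₃,
z₄ = -i t₂ + t₃` (indexed from 0). -/
def zmap (t : Fin 4 → ℂ) : Fin 4 → ℂ :=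
  ![t 0 - Complex.I * t 1, t 0 + Complex.I * t 1,
    -Complex.I * t 2 - t 3, -Complex.I * t 2 + t 3]

open Complex Metric MeasureTheory

lemma hasDerivAt_slice1 {u : ℂ × ℂ → ℂ} (hu : Differentiable ℂ u) (z w : ℂ) :
    HasDerivAt (fun x => u (x, w)) (fderiv ℂ u (z, w) (1, 0)) z := by
  have h1 : HasDerivAt (fun x : ℂ => (x, w)) ((1 : ℂ), (0 : ℂ)) z :=
    (hasDerivAt_id z).prodMk (hasDerivAt_const z w)
  exact (hu (z, w)).hasFDerivAt.comp_hasDerivAt z h1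

lemma hasDerivAt_slice2 {u : ℂ × ℂ → ℂ} (hu : Differentiable ℂ u) (z w : ℂ) :
    HasDerivAt (fun y => u (z, y)) (fderiv ℂ u (z, w) (0, 1)) w := by
  have h1 : HasDerivAt (fun y : ℂ => (z, y)) ((0 : ℂ), (1 : ℂ)) w :=
    (hasDerivAt_const w z).prodMk (hasDerivAt_id w)
  exact (hu (z, w)).hasFDerivAt.comp_hasDerivAt w h1

lemma hasDerivAt_inv_sq (ζ z : ℂ) (hne : ζ - z ≠ 0) :
    HasDerivAt (fun x => ((ζ - x) ^ 2)⁻¹) (2 * (ζ - z) / ((ζ - z) ^ 2) ^ 2) z := by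
  have h1 : HasDerivAt (fun x : ℂ => (ζ - x) ^ 2) (2 * (ζ - z) ^ 1 * (-1)) z := by
    simpa using ((hasDerivAt_id z).const_sub ζ).fun_pow 2
  have h2 := h1.fun_inv (pow_ne_zero 2 hne)
  rw [show (2 * (ζ - z) / ((ζ - z) ^ 2) ^ 2) = -(2 * (ζ - z) ^ 1 * -1) / ((ζ - z) ^ 2) ^ 2 by ring]
  exact h2

lemma norm_smul_clm (x : ℂ) (T : ℂ × ℂ →L[ℂ] ℂ) : ‖x • T‖ = ‖x‖ * ‖T‖ :=
  norm_smul x T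

theorem pda_differentiable {h : ℂ × ℂ → ℂ} (hh : Differentiable ℂ h) :
    Differentiable ℂ (pda h) := by
  intro P
  obtain ⟨a, b⟩ := P
  obtain ⟨M, hM⟩ := (isCompact_closedBall ((a, b) : ℂ × ℂ) 2).exists_bound_of_continuousOn
    hh.continuous.continuousOn
  have hM0 : 0 ≤ M := le_trans (norm_nonneg _) (hM (a, b) (mem_closedBall_self (by norm_num)))
  set c : ℝ → ℂ := circleMap a 1 with hc
  set d : ℝ → ℂ := fun θ => deriv (circleMap a 1) θ with hd
  have habs : ∀ θ, ‖c θ - a‖ = 1 := fun θ => by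
    rw [hc]; rw [circleMap_sub_center]
    simpa using abs_circleMap_zero 1 θ
  have hdabs : ∀ θ, ‖d θ‖ = 1 := fun θ => by
    simp [hd, deriv_circleMap]
  have hdc : Continuous d := by
    have : d = fun θ => circleMap 0 1 θ * I := funext fun θ => deriv_circleMap a 1 θ
    rw [this]; exact (continuous_circleMap 0 1).mul continuous_const
  have hcc : Continuous c := continuous_circleMap a 1
  have hlow : ∀ (θ : ℝ) (x : ℂ), x ∈ ball a (1/2) → (1/2 : ℝ) ≤ ‖c θ - x‖ := by
    intro θ x hx
    have h1 : ‖c θ - a‖ ≤ ‖c θ - x‖ + ‖x - a‖ := by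
      simpa using norm_add_le (c θ - x) (x - a)
    have h2 : ‖x - a‖ < 1/2 := by simpa [dist_eq_norm] using hx
    have := habs θ
    linarith
  have hne : ∀ (θ : ℝ) (x : ℂ), x ∈ ball a (1/2) → c θ - x ≠ 0 := by
    intro θ x hx h0
    have := hlow θ x hx
    rw [h0, norm_zero] at this
    linarith
  -- second-variable derivative bound
  have hb2 : ∀ (θ : ℝ) (w : ℂ), w ∈ ball b (1/2) → ‖fderiv ℂ h (c θ, w) (0, 1)‖ ≤ 2 * M := by
    intro θ w hw
    have hsl : Differentiable ℂ (fun y : ℂ => h (c θ, y)) := fun y =>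
      (hasDerivAt_slice2 hh (c θ) y).differentiableAt
    have e1 : fderiv ℂ h (c θ, w) (0, 1) = deriv (fun y : ℂ => h (c θ, y)) w :=
      (hasDerivAt_slice2 hh (c θ) w).deriv.symm
    rw [e1, ← Complex.cderiv_eq_deriv isOpen_univ hsl.differentiableOn one_half_pos
      (Set.subset_univ _)]
    have hbound : ∀ y ∈ sphere w (1/2), ‖h (c θ, y)‖ ≤ M := by
      intro y hy
      apply hM
      rw [mem_closedBall, Prod.dist_eq]
      have h1 : dist (c θ) a ≤ 2 := by
        rw [dist_eq_norm]; rw [habs θ]; norm_num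
      have h2 : dist y b ≤ 2 := by
        have hyw : dist y w = 1/2 := mem_sphere.mp hy
        have hwb : dist w b < 1/2 := mem_ball.mp hw
        calc dist y b ≤ dist y w + dist w b := dist_triangle y w b
        _ ≤ 2 := by rw [hyw]; linarith
      exact max_le h1 h2
    have := Complex.norm_cderiv_le one_half_pos hbound
    calc ‖Complex.cderiv (1/2) (fun y : ℂ => h (c θ, y)) w‖ ≤ M / (1/2) := this
      _ = 2 * M := by ring
  -- the parametric integrand and its derivative
  set F : ℂ × ℂ → ℝ → ℂ := fun p θ => d θ • (((c θ - p.1) ^ 2)⁻¹ * h (c θ, p.2)) with hFdef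
  set F' : ℂ × ℂ → ℝ → (ℂ × ℂ →L[ℂ] ℂ) := fun p θ =>
    d θ • (((c θ - p.1) ^ 2)⁻¹ • ((fderiv ℂ h (c θ, p.2) (0, 1)) • ContinuousLinearMap.snd ℂ ℂ ℂ)
      + h (c θ, p.2) • ((2 * (c θ - p.1) / ((c θ - p.1) ^ 2) ^ 2) •
          ContinuousLinearMap.fst ℂ ℂ ℂ)) with hF'def
  have hball1 : ∀ p : ℂ × ℂ, p ∈ ball ((a, b) : ℂ × ℂ) (1/2) → p.1 ∈ ball a (1/2) := by
    intro p hp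
    rw [mem_ball] at hp ⊢
    have h1 : dist p.1 a ≤ dist p ((a, b) : ℂ × ℂ) := by
      rw [Prod.dist_eq]; exact le_sup_left
    exact lt_of_le_of_lt h1 hp
  have hball2 : ∀ p : ℂ × ℂ, p ∈ ball ((a, b) : ℂ × ℂ) (1/2) → p.2 ∈ ball b (1/2) := by
    intro p hp
    rw [mem_ball] at hp ⊢
    have h1 : dist p.2 b ≤ dist p ((a, b) : ℂ × ℂ) := by
      rw [Prod.dist_eq]; exact le_sup_right
    exact lt_of_le_of_lt h1 hp
  -- differentiability of the integrand
  have h_diff : ∀ (θ : ℝ), ∀ p ∈ ball ((a, b) : ℂ × ℂ) (1/2),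
      HasFDerivAt (fun p : ℂ × ℂ => F p θ) (F' p θ) p := by
    intro θ p hp
    have hx := hball1 p hp
    have hne1 : c θ - p.1 ≠ 0 := hne θ p.1 hx
    have h1 : HasFDerivAt (fun p : ℂ × ℂ => ((c θ - p.1) ^ 2)⁻¹)
        ((2 * (c θ - p.1) / ((c θ - p.1) ^ 2) ^ 2) • ContinuousLinearMap.fst ℂ ℂ ℂ) p :=
      (hasDerivAt_inv_sq (c θ) p.1 hne1).comp_hasFDerivAt p
        (ContinuousLinearMap.fst ℂ ℂ ℂ).hasFDerivAt
    have h2 : HasFDerivAt (fun p : ℂ × ℂ => h (c θ, p.2))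
        ((fderiv ℂ h (c θ, p.2) (0, 1)) • ContinuousLinearMap.snd ℂ ℂ ℂ) p :=
      (hasDerivAt_slice2 hh (c θ) p.2).comp_hasFDerivAt p
        (ContinuousLinearMap.snd ℂ ℂ ℂ).hasFDerivAt
    exact (h1.mul h2).const_smul (d θ)
  -- the bound
  have h_bound : ∀ (θ : ℝ), ∀ p ∈ ball ((a, b) : ℂ × ℂ) (1/2), ‖F' p θ‖ ≤ 56 * M := by
    intro θ p hp
    have hx := hball1 p hp
    have hw := hball2 p hp
    have hl : (1/2 : ℝ) ≤ ‖c θ - p.1‖ := hlow θ p.1 hx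
    have hup : ‖c θ - p.1‖ ≤ 3/2 := by
      have h1 : ‖c θ - p.1‖ ≤ ‖c θ - a‖ + ‖a - p.1‖ := by
        simpa using norm_add_le (c θ - a) (a - p.1)
      have h2 : ‖a - p.1‖ < 1/2 := by
        rw [norm_sub_rev]; simpa [dist_eq_norm] using hx
      have := habs θ
      linarith
    have hmem : ((c θ, p.2) : ℂ × ℂ) ∈ closedBall ((a, b) : ℂ × ℂ) 2 := by
      rw [mem_closedBall, Prod.dist_eq]
      have h1 : dist (c θ) a ≤ 2 := by rw [dist_eq_norm, habs θ]; norm_num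
      have h2 : dist p.2 b ≤ 2 := le_trans (le_of_lt (mem_ball.mp hw)) (by norm_num)
      exact max_le h1 h2
    have hB : ‖h (c θ, p.2)‖ ≤ M := hM _ hmem
    have hX : ‖fderiv ℂ h (c θ, p.2) (0, 1)‖ ≤ 2 * M := hb2 θ p.2 hw
    have hA : ‖((c θ - p.1) ^ 2)⁻¹‖ ≤ 4 := by
      rw [norm_inv, norm_pow]
      rw [show (4 : ℝ) = ((1/2 : ℝ) ^ 2)⁻¹ by norm_num]
      apply inv_anti₀ (by positivity)
      exact pow_le_pow_left₀ (by norm_num) hl 2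
    have hA' : ‖2 * (c θ - p.1) / ((c θ - p.1) ^ 2) ^ 2‖ ≤ 48 := by
      rw [norm_div, norm_mul, norm_pow, norm_pow]
      have hd4 : (1/2 : ℝ) ^ 4 ≤ (‖c θ - p.1‖ ^ 2) ^ 2 := by
        rw [← pow_mul]
        exact pow_le_pow_left₀ (by norm_num) hl 4
      have hnum : ‖(2 : ℂ)‖ * ‖c θ - p.1‖ ≤ 3 := by
        rw [show ‖(2 : ℂ)‖ = 2 by simp]
        linarith
      calc ‖(2 : ℂ)‖ * ‖c θ - p.1‖ / (‖c θ - p.1‖ ^ 2) ^ 2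
          ≤ 3 / ((1/2 : ℝ) ^ 4) := by
            apply div_le_div₀ (by norm_num) hnum (by positivity) hd4
        _ = 48 := by norm_num
    have hfst : ‖ContinuousLinearMap.fst ℂ ℂ ℂ‖ ≤ 1 := ContinuousLinearMap.norm_fst_le ℂ ℂ ℂ
    have hsnd : ‖ContinuousLinearMap.snd ℂ ℂ ℂ‖ ≤ 1 := ContinuousLinearMap.norm_snd_le ℂ ℂ ℂ
    have e1 : ‖F' p θ‖ = ‖(((c θ - p.1) ^ 2)⁻¹ •
        ((fderiv ℂ h (c θ, p.2) (0, 1)) • ContinuousLinearMap.snd ℂ ℂ ℂ)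
        + h (c θ, p.2) • ((2 * (c θ - p.1) / ((c θ - p.1) ^ 2) ^ 2) •
          ContinuousLinearMap.fst ℂ ℂ ℂ))‖ := by
      rw [show F' p θ = d θ • (((c θ - p.1) ^ 2)⁻¹ •
        ((fderiv ℂ h (c θ, p.2) (0, 1)) • ContinuousLinearMap.snd ℂ ℂ ℂ)
        + h (c θ, p.2) • ((2 * (c θ - p.1) / ((c θ - p.1) ^ 2) ^ 2) •
          ContinuousLinearMap.fst ℂ ℂ ℂ)) from rfl, norm_smul_clm, hdabs θ, one_mul]
    rw [e1]
    calc _ ≤ ‖((c θ - p.1) ^ 2)⁻¹ • ((fderiv ℂ h (c θ, p.2) (0, 1)) •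
            ContinuousLinearMap.snd ℂ ℂ ℂ)‖
          + ‖h (c θ, p.2) • ((2 * (c θ - p.1) / ((c θ - p.1) ^ 2) ^ 2) •
            ContinuousLinearMap.fst ℂ ℂ ℂ)‖ := norm_add_le _ _
      _ ≤ 4 * (2 * M * 1) + M * (48 * 1) := by
          apply add_le_add
          · rw [norm_smul_clm, norm_smul_clm]
            apply mul_le_mul hA (mul_le_mul hX hsnd (norm_nonneg _) (by linarith))
              (by positivity) (by norm_num)
          · rw [norm_smul_clm, norm_smul_clm]
            apply mul_le_mul hB (mul_le_mul hA' hfst (norm_nonneg _) (by norm_num))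
              (by positivity) hM0
      _ = 56 * M := by ring
  -- measurability and integrability
  have hcont : ∀ x : ℂ × ℂ, x ∈ ball ((a, b) : ℂ × ℂ) (1/2) → Continuous (F x) := by
    intro x hx
    have hx1 := hball1 x hx
    have h1 : Continuous fun θ => ((c θ - x.1) ^ 2)⁻¹ :=
      Continuous.inv₀ ((hcc.sub continuous_const).pow 2)
        (fun θ => pow_ne_zero 2 (hne θ x.1 hx1))
    exact hdc.smul (h1.mul (hh.continuous.comp (hcc.prodMk continuous_const)))
  have hF_meas : ∀ᶠ x in nhds ((a, b) : ℂ × ℂ),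
      AEStronglyMeasurable (F x) (volume.restrict (Set.uIoc 0 (2 * Real.pi))) := by
    filter_upwards [ball_mem_nhds ((a, b) : ℂ × ℂ) one_half_pos] with x hx
    exact (hcont x hx).aestronglyMeasurable
  have hab : ((a, b) : ℂ × ℂ) ∈ ball ((a, b) : ℂ × ℂ) (1/2) :=
    mem_ball_self one_half_pos
  have hF_int : IntervalIntegrable (F ((a, b) : ℂ × ℂ)) volume 0 (2 * Real.pi) :=
    (hcont _ hab).intervalIntegrable 0 (2 * Real.pi)
  have hF'_meas : AEStronglyMeasurable (F' ((a, b) : ℂ × ℂ))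
      (volume.restrict (Set.uIoc 0 (2 * Real.pi))) := by
    have m1 : Measurable fun θ => fderiv ℂ h (c θ, b) ((0 : ℂ), (1 : ℂ)) := by
      have m0 : Measurable fun θ => fderiv ℂ h (c θ, b) :=
        (measurable_fderiv ℂ h).comp (hcc.prodMk continuous_const).measurable
      exact ((ContinuousLinearMap.apply ℂ ℂ ((0 : ℂ), (1 : ℂ))).continuous.measurable).comp m0
    have m2 : Measurable fun θ =>
        (fderiv ℂ h (c θ, b) ((0 : ℂ), (1 : ℂ))) • ContinuousLinearMap.snd ℂ ℂ ℂ := by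
      have : Continuous fun z : ℂ => z • ContinuousLinearMap.snd ℂ ℂ ℂ :=
        continuous_id.smul continuous_const
      exact this.measurable.comp m1
    have m3 : Measurable fun θ => ((c θ - a) ^ 2)⁻¹ •
        ((fderiv ℂ h (c θ, b) ((0 : ℂ), (1 : ℂ))) • ContinuousLinearMap.snd ℂ ℂ ℂ) := by
      have mc : Measurable fun θ => ((c θ - a) ^ 2)⁻¹ :=
        (Continuous.inv₀ ((hcc.sub continuous_const).pow 2)
          (fun θ => pow_ne_zero 2 (hne θ a (mem_ball_self one_half_pos)))).measurable
      have hs : Continuous fun q : ℂ × (ℂ × ℂ →L[ℂ] ℂ) => q.1 • q.2 := continuous_smul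
      exact hs.measurable.comp (mc.prodMk m2)
    have m4 : Measurable fun θ => h (c θ, b) •
        ((2 * (c θ - a) / ((c θ - a) ^ 2) ^ 2) • ContinuousLinearMap.fst ℂ ℂ ℂ) := by
      have mc1 : Continuous fun θ => h (c θ, b) :=
        hh.continuous.comp (hcc.prodMk continuous_const)
      have mc2 : Continuous fun θ => (2 * (c θ - a) / ((c θ - a) ^ 2) ^ 2) •
          ContinuousLinearMap.fst ℂ ℂ ℂ := by
        apply Continuous.fun_smul _ continuous_const
        exact (continuous_const.mul (hcc.sub continuous_const)).div
          (((hcc.sub continuous_const).pow 2).pow 2)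
          (fun θ => pow_ne_zero 2 (pow_ne_zero 2 (hne θ a (mem_ball_self one_half_pos))))
      have hs : Continuous fun q : ℂ × (ℂ × ℂ →L[ℂ] ℂ) => q.1 • q.2 := continuous_smul
      exact hs.measurable.comp (mc1.measurable.prodMk mc2.measurable)
    have m5 : Measurable (F' ((a, b) : ℂ × ℂ)) := by
      have hs : Continuous fun q : ℂ × (ℂ × ℂ →L[ℂ] ℂ) => q.1 • q.2 := continuous_smul
      exact hs.measurable.comp (hdc.measurable.prodMk (m3.add m4))
    exact m5.aestronglyMeasurable
  -- apply differentiation under the integral sign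
  have key := intervalIntegral.hasFDerivAt_integral_of_dominated_of_fderiv_le
    (μ := volume) (a := 0) (b := 2 * Real.pi) (F := F) (F' := F')
    (x₀ := ((a, b) : ℂ × ℂ)) (bound := fun _ => 56 * M) (ball_mem_nhds _ one_half_pos) hF_meas hF_int hF'_meas
    (MeasureTheory.ae_of_all _ (fun θ _ => h_bound θ))
    intervalIntegrable_const
    (MeasureTheory.ae_of_all _ (fun θ _ => h_diff θ))
  -- identify `pda h` with the integral near (a, b)
  have heq : pda h =ᶠ[nhds ((a, b) : ℂ × ℂ)]
      fun x => (2 * ↑Real.pi * Complex.I)⁻¹ • ∫ θ in (0 : ℝ)..(2 * Real.pi), F x θ := by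
    filter_upwards [ball_mem_nhds ((a, b) : ℂ × ℂ) one_half_pos] with x hx
    have hx1 := hball1 x hx
    have hsl : Differentiable ℂ (fun s : ℂ => h (s, x.2)) := fun z =>
      (hasDerivAt_slice1 hh z x.2).differentiableAt
    have hcau := Complex.two_pi_I_inv_smul_circleIntegral_sub_sq_inv_smul_of_differentiable
      isOpen_univ (Set.subset_univ (closedBall a 1)) hsl.differentiableOn
      (mem_ball.mpr (lt_trans (mem_ball.mp hx1) one_half_lt_one))
    have e1 : pda h x = deriv (fun s : ℂ => h (s, x.2)) x.1 := by
      rw [(hasDerivAt_slice1 hh x.1 x.2).deriv]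
      rfl
    have e2 : (∮ z in C(a, 1), ((z - x.1) ^ 2)⁻¹ • h (z, x.2)) =
        ∫ θ in (0 : ℝ)..(2 * Real.pi), F x θ := by
      simp only [circleIntegral, smul_eq_mul, hFdef]
      rfl
    rw [e1, ← hcau, e2]
  have hdif : DifferentiableAt ℂ
      (fun x : ℂ × ℂ => (2 * ↑Real.pi * Complex.I)⁻¹ •
        ∫ θ in (0 : ℝ)..(2 * Real.pi), F x θ) ((a, b) : ℂ × ℂ) :=
    key.differentiableAt.fun_const_smul _
  exact (heq.differentiableAt_iff).mpr hdif

theorem pdb_differentiable {h : ℂ × ℂ → ℂ} (hh : Differentiable ℂ h) :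
    Differentiable ℂ (pdb h) := by
  set S : ℂ × ℂ →L[ℂ] ℂ × ℂ :=
    (ContinuousLinearMap.snd ℂ ℂ ℂ).prod (ContinuousLinearMap.fst ℂ ℂ ℂ) with hS
  have hswap : Differentiable ℂ (fun q : ℂ × ℂ => h (S q)) :=
    hh.comp S.differentiable
  have h1 : Differentiable ℂ (pda (fun q : ℂ × ℂ => h (S q))) := pda_differentiable hswap
  have e : pdb h = fun p : ℂ × ℂ => pda (fun q : ℂ × ℂ => h (S q)) (p.2, p.1) := by
    funext p
    unfold pda pdb
    have e1 : (fun q : ℂ × ℂ => h (S q)) = h ∘ ⇑S := rfl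
    rw [e1, fderiv_comp _ (hh _) S.differentiableAt, S.fderiv]
    have e2 : S ((p.2, p.1) : ℂ × ℂ) = p := rfl
    rw [e2]
    rfl
  rw [e]
  exact h1.comp ((differentiable_snd).prodMk (differentiable_fst))

-- linear change of variables as continuous linear maps
def L1 : (Fin 4 → ℂ) →L[ℂ] ℂ :=
  ContinuousLinearMap.proj 0 - Complex.I • ContinuousLinearMap.proj 1
def L2 : (Fin 4 → ℂ) →L[ℂ] ℂ :=
  ContinuousLinearMap.proj 0 + Complex.I • ContinuousLinearMap.proj 1
def L3 : (Fin 4 → ℂ) →L[ℂ] ℂ :=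
  -(Complex.I • ContinuousLinearMap.proj 2) - ContinuousLinearMap.proj 3
def L4 : (Fin 4 → ℂ) →L[ℂ] ℂ :=
  -(Complex.I • ContinuousLinearMap.proj 2) + ContinuousLinearMap.proj 3

def phig : (Fin 4 → ℂ) →L[ℂ] ℂ × ℂ := L2.prod L3
def phih : (Fin 4 → ℂ) →L[ℂ] ℂ × ℂ := L1.prod L4

lemma zmap0 (t : Fin 4 → ℂ) : zmap t 0 = L1 t := by
  simp [zmap, L1, ContinuousLinearMap.sub_apply, ContinuousLinearMap.smul_apply,
    ContinuousLinearMap.proj_apply, smul_eq_mul]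

lemma zmap1 (t : Fin 4 → ℂ) : zmap t 1 = L2 t := by
  simp [zmap, L2, ContinuousLinearMap.add_apply, ContinuousLinearMap.smul_apply,
    ContinuousLinearMap.proj_apply, smul_eq_mul]

lemma zmap2 (t : Fin 4 → ℂ) : zmap t 2 = L3 t := by
  simp [zmap, L3, ContinuousLinearMap.sub_apply, ContinuousLinearMap.neg_apply,
    ContinuousLinearMap.smul_apply, ContinuousLinearMap.proj_apply, smul_eq_mul]

lemma zmap3 (t : Fin 4 → ℂ) : zmap t 3 = L4 t := by
  simp [zmap, L4, ContinuousLinearMap.add_apply, ContinuousLinearMap.neg_apply,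
    ContinuousLinearMap.smul_apply, ContinuousLinearMap.proj_apply, smul_eq_mul]

lemma pairg (t : Fin 4 → ℂ) : (zmap t 1, zmap t 2) = phig t := by
  rw [zmap1, zmap2]; rfl

lemma pairh (t : Fin 4 → ℂ) : (zmap t 0, zmap t 3) = phih t := by
  rw [zmap0, zmap3]; rfl

-- values on basis vectors
lemma L1s0 : L1 (Pi.single 0 1) = 1 := by simp [L1]
lemma L1s1 : L1 (Pi.single 1 1) = -Complex.I := by simp [L1]
lemma L1s2 : L1 (Pi.single 2 1) = 0 := by simp [L1]
lemma L1s3 : L1 (Pi.single 3 1) = 0 := by simp [L1]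
lemma L2s0 : L2 (Pi.single 0 1) = 1 := by simp [L2]
lemma L2s1 : L2 (Pi.single 1 1) = Complex.I := by simp [L2]
lemma L2s2 : L2 (Pi.single 2 1) = 0 := by simp [L2]
lemma L2s3 : L2 (Pi.single 3 1) = 0 := by simp [L2]
lemma L3s0 : L3 (Pi.single 0 1) = 0 := by simp [L3]
lemma L3s1 : L3 (Pi.single 1 1) = 0 := by simp [L3]
lemma L3s2 : L3 (Pi.single 2 1) = -Complex.I := by simp [L3]
lemma L3s3 : L3 (Pi.single 3 1) = -1 := by simp [L3]
lemma L4s0 : L4 (Pi.single 0 1) = 0 := by simp [L4]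
lemma L4s1 : L4 (Pi.single 1 1) = 0 := by simp [L4]
lemma L4s2 : L4 (Pi.single 2 1) = -Complex.I := by simp [L4]
lemma L4s3 : L4 (Pi.single 3 1) = 1 := by simp [L4]

lemma phig_s0 : phig (Pi.single 0 1) = ((1 : ℂ), (0 : ℂ)) := by
  show (L2 _, L3 _) = _
  rw [L2s0, L3s0]
lemma phig_s1 : phig (Pi.single 1 1) = Complex.I • ((1 : ℂ), (0 : ℂ)) := by
  show (L2 _, L3 _) = _
  rw [L2s1, L3s1]
  simp [Prod.smul_mk]
lemma phig_s2 : phig (Pi.single 2 1) = (-Complex.I) • ((0 : ℂ), (1 : ℂ)) := by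
  show (L2 _, L3 _) = _
  rw [L2s2, L3s2]
  simp [Prod.smul_mk]
lemma phig_s3 : phig (Pi.single 3 1) = (-1 : ℂ) • ((0 : ℂ), (1 : ℂ)) := by
  show (L2 _, L3 _) = _
  rw [L2s3, L3s3]
  simp [Prod.smul_mk]
lemma phih_s0 : phih (Pi.single 0 1) = ((1 : ℂ), (0 : ℂ)) := by
  show (L1 _, L4 _) = _
  rw [L1s0, L4s0]
lemma phih_s1 : phih (Pi.single 1 1) = (-Complex.I) • ((1 : ℂ), (0 : ℂ)) := by
  show (L1 _, L4 _) = _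
  rw [L1s1, L4s1]
  simp [Prod.smul_mk]
lemma phih_s2 : phih (Pi.single 2 1) = (-Complex.I) • ((0 : ℂ), (1 : ℂ)) := by
  show (L1 _, L4 _) = _
  rw [L1s2, L4s2]
  simp [Prod.smul_mk]
lemma phih_s3 : phih (Pi.single 3 1) = ((0 : ℂ), (1 : ℂ)) := by
  show (L1 _, L4 _) = _
  rw [L1s3, L4s3]

-- pd helper lemmas
lemma pd_comp (j : Fin 4) (u : ℂ × ℂ → ℂ) (hu : Differentiable ℂ u)
    (φ : (Fin 4 → ℂ) →L[ℂ] (ℂ × ℂ)) (t : Fin 4 → ℂ) :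
    pd j (fun s => u (φ s)) t = fderiv ℂ u (φ t) (φ (Pi.single j 1)) := by
  unfold pd
  rw [show (fun s => u (φ s)) = u ∘ ⇑φ from rfl,
    fderiv_comp t (hu _) (φ.differentiableAt), φ.fderiv]
  rfl

lemma pd_clm (j : Fin 4) (φ : (Fin 4 → ℂ) →L[ℂ] ℂ) (t : Fin 4 → ℂ) :
    pd j (⇑φ) t = φ (Pi.single j 1) := by
  unfold pd
  rw [φ.fderiv]

lemma pd_add (j : Fin 4) {u v : (Fin 4 → ℂ) → ℂ} {t : Fin 4 → ℂ}
    (hu : DifferentiableAt ℂ u t) (hv : DifferentiableAt ℂ v t) :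
    pd j (fun s => u s + v s) t = pd j u t + pd j v t := by
  unfold pd
  rw [fderiv_fun_add hu hv]
  rfl

lemma pd_mul (j : Fin 4) {u v : (Fin 4 → ℂ) → ℂ} {t : Fin 4 → ℂ}
    (hu : DifferentiableAt ℂ u t) (hv : DifferentiableAt ℂ v t) :
    pd j (fun s => u s * v s) t = pd j u t * v t + u t * pd j v t := by
  unfold pd
  rw [fderiv_fun_mul hu hv]
  simp only [ContinuousLinearMap.add_apply, ContinuousLinearMap.smul_apply, smul_eq_mul]
  ring

lemma pda_eq (u : ℂ × ℂ → ℂ) (p : ℂ × ℂ) : fderiv ℂ u p ((1 : ℂ), (0 : ℂ)) = pda u p := rfl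
lemma pdb_eq (u : ℂ × ℂ → ℂ) (p : ℂ × ℂ) : fderiv ℂ u p ((0 : ℂ), (1 : ℂ)) = pdb u p := rfl

lemma qI_re : qI.re = 0 := rfl
lemma qI_imI : qI.imI = 1 := rfl
lemma qI_imJ : qI.imJ = 0 := rfl
lemma qI_imK : qI.imK = 0 := rfl
lemma qJ_re : qJ.re = 0 := rfl
lemma qJ_imI : qJ.imI = 0 := rfl
lemma qJ_imJ : qJ.imJ = 1 := rfl
lemma qJ_imK : qJ.imK = 0 := rfl
lemma qK_re : qK.re = 0 := rfl
lemma qK_imI : qK.imI = 0 := rfl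
lemma qK_imJ : qK.imJ = 0 := rfl
lemma qK_imK : qK.imK = 1 := rfl

set_option maxHeartbeats 2000000 in
/-- the function
`F(t) = g(z₂,z₃) e₁ + h(z₁,z₄) e₂ + (z₃ ∂h/∂w₁ + z₂ ∂h/∂w₂) e₃ + (z₄ ∂g/∂w₁ + z₁ ∂g/∂w₂) e₄`
with `z = zmap t` satisfies the Cauchy–Fueter type equation
`∂F/∂t₀ + I ∂F/∂t₁ + J ∂F/∂t₂ + K ∂F/∂t₃ = 0` on ℂ⁴. -/
theorem solution_of_cauchyFueter_equation
    (g h : ℂ × ℂ → ℂ) (hg : Differentiable ℂ g) (hh : Differentiable ℂ h)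
    (F : Fin 4 → (Fin 4 → ℂ) → ℂ)
    (hF0 : ∀ t : Fin 4 → ℂ, F 0 t = g (zmap t 1, zmap t 2))
    (hF1 : ∀ t : Fin 4 → ℂ, F 1 t = h (zmap t 0, zmap t 3))
    (hF2 : ∀ t : Fin 4 → ℂ,
      F 2 t = zmap t 2 * pda h (zmap t 0, zmap t 3) + zmap t 1 * pdb h (zmap t 0, zmap t 3))
    (hF3 : ∀ t : Fin 4 → ℂ,
      F 3 t = zmap t 3 * pda g (zmap t 1, zmap t 2) + zmap t 0 * pdb g (zmap t 1, zmap t 2)) :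
    ∀ t : Fin 4 → ℂ,
      Dc F 0 t + qI * Dc F 1 t + qJ * Dc F 2 t + qK * Dc F 3 t = 0 := by
  intro t
  have hpag : Differentiable ℂ (pda g) := pda_differentiable hg
  have hpbg : Differentiable ℂ (pdb g) := pdb_differentiable hg
  have hpah : Differentiable ℂ (pda h) := pda_differentiable hh
  have hpbh : Differentiable ℂ (pdb h) := pdb_differentiable hh
  have eF0 : F 0 = fun s => g (phig s) := funext fun s => by rw [hF0 s, pairg s]
  have eF1 : F 1 = fun s => h (phih s) := funext fun s => by rw [hF1 s, pairh s]
  have eF2 : F 2 = fun s => L3 s * pda h (phih s) + L2 s * pdb h (phih s) :=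
    funext fun s => by rw [hF2 s, pairh s, zmap2 s, zmap1 s]
  have eF3 : F 3 = fun s => L4 s * pda g (phig s) + L1 s * pdb g (phig s) :=
    funext fun s => by rw [hF3 s, pairg s, zmap3 s, zmap0 s]
  have c0 : ∀ j, pd j (F 0) t = fderiv ℂ g (phig t) (phig (Pi.single j 1)) := fun j => by
    rw [eF0]; exact pd_comp j g hg phig t
  have c1 : ∀ j, pd j (F 1) t = fderiv ℂ h (phih t) (phih (Pi.single j 1)) := fun j => by
    rw [eF1]; exact pd_comp j h hh phih t
  have dah : DifferentiableAt ℂ (fun s => pda h (phih s)) t :=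
    (hpah _).comp t phih.differentiableAt
  have dbh : DifferentiableAt ℂ (fun s => pdb h (phih s)) t :=
    (hpbh _).comp t phih.differentiableAt
  have dag : DifferentiableAt ℂ (fun s => pda g (phig s)) t :=
    (hpag _).comp t phig.differentiableAt
  have dbg : DifferentiableAt ℂ (fun s => pdb g (phig s)) t :=
    (hpbg _).comp t phig.differentiableAt
  have c2 : ∀ j, pd j (F 2) t =
      (L3 (Pi.single j 1) * pda h (phih t)
        + L3 t * fderiv ℂ (pda h) (phih t) (phih (Pi.single j 1)))
      + (L2 (Pi.single j 1) * pdb h (phih t)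
        + L2 t * fderiv ℂ (pdb h) (phih t) (phih (Pi.single j 1))) := fun j => by
    rw [eF2,
      pd_add j (L3.differentiableAt.fun_mul dah) (L2.differentiableAt.fun_mul dbh),
      pd_mul j L3.differentiableAt dah, pd_mul j L2.differentiableAt dbh,
      pd_clm j L3 t, pd_clm j L2 t,
      pd_comp j (pda h) hpah phih t, pd_comp j (pdb h) hpbh phih t]
  have c3 : ∀ j, pd j (F 3) t =
      (L4 (Pi.single j 1) * pda g (phig t)
        + L4 t * fderiv ℂ (pda g) (phig t) (phig (Pi.single j 1)))
      + (L1 (Pi.single j 1) * pdb g (phig t)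
        + L1 t * fderiv ℂ (pdb g) (phig t) (phig (Pi.single j 1))) := fun j => by
    rw [eF3,
      pd_add j (L4.differentiableAt.fun_mul dag) (L1.differentiableAt.fun_mul dbg),
      pd_mul j L4.differentiableAt dag, pd_mul j L1.differentiableAt dbg,
      pd_clm j L4 t, pd_clm j L1 t,
      pd_comp j (pda g) hpag phig t, pd_comp j (pdb g) hpbg phig t]
  simp only [Dc, Fin.sum_univ_four]
  rw [c0 0, c0 1, c0 2, c0 3, c1 0, c1 1, c1 2, c1 3,
    c2 0, c2 1, c2 2, c2 3, c3 0, c3 1, c3 2, c3 3]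
  rw [phig_s0, phig_s1, phig_s2, phig_s3, phih_s0, phih_s1, phih_s2, phih_s3,
    L1s0, L1s1, L1s2, L1s3, L2s0, L2s1, L2s2, L2s3,
    L3s0, L3s1, L3s2, L3s3, L4s0, L4s1, L4s2, L4s3]
  simp only [_root_.map_smul, smul_eq_mul, pda_eq, pdb_eq]
  apply Quaternion.ext <;>
    simp only [ee, qI_re, qI_imI, qI_imJ, qI_imK, qJ_re, qJ_imI, qJ_imJ, qJ_imK,
      qK_re, qK_imI, qK_imJ, qK_imK, Matrix.cons_val_zero, Matrix.cons_val_one, Matrix.head_cons,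
      Matrix.cons_val_two, Matrix.tail_cons, Matrix.cons_val_three,
      Quaternion.re_add, Quaternion.imI_add, Quaternion.imJ_add, Quaternion.imK_add,
      Quaternion.re_mul, Quaternion.imI_mul, Quaternion.imJ_mul, Quaternion.imK_mul,
      Quaternion.re_smul, Quaternion.imI_smul, Quaternion.imJ_smul, Quaternion.imK_smul,
      Quaternion.re_sub, Quaternion.imI_sub, Quaternion.imJ_sub, Quaternion.imK_sub,
      Quaternion.re_one, Quaternion.imI_one, Quaternion.imJ_one, Quaternion.imK_one,
      Quaternion.re_zero, Quaternion.imI_zero, Quaternion.imJ_zero, Quaternion.imK_zero,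
      smul_eq_mul] <;>
    ring_nf <;>
    simp only [Complex.I_sq] <;>
    ring
end
end

section
/- Let Ω ⊆ ℂ² be open, regard ζ = z_1 e_1 + z_2 e_2 for (z_1,z_2) ∈ Ω as a bicomplex variable, and let f : Ω → ℍ(ℂ) have holomorphic components. Suppose f is left-𝔹ℂ-hyperholomorphic, i.e. there exists f'_l : Ω → ℍ(ℂ) such that for every h = h_1 e_1 + h_2 e_2 with h_1,h_2 ∈ ℂ, the limit as the complex parameter ε → 0 (ε ≠ 0) of ε⁻¹ ( f(ζ + εh) − f(ζ) ) exists and equals f'_l(ζ) · h for every ζ ∈ Ω. Then f satisfies the Cauchy–Riemann type condition (∂f/∂z_1) e_2 = (∂f/∂z_2) e_1 on Ω; equivalently, f satisfies the right-ψ-hyperholomorphy equation (∂f/∂z_1) ψ_1 + (∂f/∂z_2) ψ_2 = 0 with ψ_1 = e_2, ψ_2 = −e_1. -/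
noncomputable section

open Quaternion

lemma ee_mul_01 : ee 0 * ee 1 = 0 := by
  show ((2⁻¹ : ℂ) • (1 + Complex.I • qI)) * ((2⁻¹ : ℂ) • (1 - Complex.I • qI)) = 0
  ext <;>
    simp [Quaternion.re_mul, Quaternion.imI_mul,
      Quaternion.imJ_mul, Quaternion.imK_mul] <;> simp [qI] <;>
    ring_nf <;>
    simp [Complex.I_sq]

lemma ee_mul_10 : ee 1 * ee 0 = 0 := by
  show ((2⁻¹ : ℂ) • (1 - Complex.I • qI)) * ((2⁻¹ : ℂ) • (1 + Complex.I • qI)) = 0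
  ext <;>
    simp [Quaternion.re_mul, Quaternion.imI_mul,
      Quaternion.imJ_mul, Quaternion.imK_mul] <;> simp [qI] <;>
    ring_nf <;>
    simp [Complex.I_sq]

lemma ee_mul_neg10 : ee 1 * (-(ee 0)) = 0 := by
  show ((2⁻¹ : ℂ) • (1 - Complex.I • qI)) * (-((2⁻¹ : ℂ) • (1 + Complex.I • qI))) = 0
  ext <;>
    simp [Quaternion.re_mul, Quaternion.imI_mul,
      Quaternion.imJ_mul, Quaternion.imK_mul] <;> simp [qI] <;>
    ring_nf <;>
    simp [Complex.I_sq]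

lemma key_tendsto (Ω : Set (ℂ × ℂ)) (hΩ : IsOpen Ω)
    (f : Fin 4 → ℂ × ℂ → ℂ) (hf : ∀ k, DifferentiableOn ℂ (f k) Ω)
    (F : ℂ × ℂ → ℍ[ℂ]) (hF : ∀ p, F p = ∑ k, f k p • ee k)
    (p : ℂ × ℂ) (hp : p ∈ Ω) (h1 h2 : ℂ) :
    Filter.Tendsto
      (fun ε : ℂ => QuaternionAlgebra.equivTuple (-1 : ℂ) (0 : ℂ) (-1 : ℂ)
        (ε⁻¹ • (F (p.1 + ε * h1, p.2 + ε * h2) - F p)))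
      (nhdsWithin 0 {(0 : ℂ)}ᶜ)
      (nhds (QuaternionAlgebra.equivTuple (-1 : ℂ) (0 : ℂ) (-1 : ℂ)
        (∑ k, (fderiv ℂ (f k) p (h1, h2)) • ee k))) := by
  have hsub : ∀ (j : Fin 4) (a : ℂ) (x y : ℍ[ℂ]),
      QuaternionAlgebra.equivTuple (-1 : ℂ) (0 : ℂ) (-1 : ℂ) (a • (x - y)) j =
        a * (QuaternionAlgebra.equivTuple (-1 : ℂ) (0 : ℂ) (-1 : ℂ) x j
          - QuaternionAlgebra.equivTuple (-1 : ℂ) (0 : ℂ) (-1 : ℂ) y j) := by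
    intro j a x y
    fin_cases j <;> rfl
  have hsum : ∀ (j : Fin 4) (c : Fin 4 → ℂ),
      QuaternionAlgebra.equivTuple (-1 : ℂ) (0 : ℂ) (-1 : ℂ) (∑ k, c k • ee k) j =
        ∑ k, c k * QuaternionAlgebra.equivTuple (-1 : ℂ) (0 : ℂ) (-1 : ℂ) (ee k) j := by
    intro j c
    fin_cases j <;> (erw [Fin.sum_univ_four, Fin.sum_univ_four]; rfl)
  rw [tendsto_pi_nhds]
  intro j
  -- the scalar function g
  set c : Fin 4 → ℂ := fun k => QuaternionAlgebra.equivTuple (-1 : ℂ) (0 : ℂ) (-1 : ℂ) (ee k) j with hc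
  have hg : HasDerivAt (fun ε : ℂ => ∑ k, f k (p.1 + ε * h1, p.2 + ε * h2) * c k)
      (∑ k, fderiv ℂ (f k) p (h1, h2) * c k) 0 := by
    apply HasDerivAt.fun_sum
    intro k _
    have hin : HasDerivAt (fun ε : ℂ => (p.1 + ε * h1, p.2 + ε * h2)) (h1, h2) 0 := by
      exact ((hasDerivAt_mul_const h1).const_add p.1).prodMk
        ((hasDerivAt_mul_const h2).const_add p.2)
    have hdk : DifferentiableAt ℂ (f k) p :=
      (hf k).differentiableAt (hΩ.mem_nhds hp)
    have hdk' : HasFDerivAt (f k) (fderiv ℂ (f k) p) (p.1 + 0 * h1, p.2 + 0 * h2) := by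
      simpa using hdk.hasFDerivAt
    have hcomp := hdk'.comp_hasDerivAt 0 hin
    exact hcomp.mul_const (c k)
  have hT := hasDerivAt_iff_tendsto_slope.mp hg
  rw [hsum j]
  refine hT.congr fun ε => ?_
  rw [hsub, hF, hF]
  erw [hsum, hsum]
  simp [slope_def_field, div_eq_inv_mul]
  exact Or.inl (by simp [hc, QuaternionAlgebra.equivTuple_apply])

/-- a left-𝔹ℂ-hyperholomorphic function `f(ζ) = Σ fₖ(z₁,z₂) eₖ`
(the limit of `ε⁻¹(f(ζ+εh) - f(ζ))` exists and equals `f'_l(ζ) ⬝ h` for every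
`h = h₁e₁ + h₂e₂ ∈ 𝔹ℂ`, the limit being taken componentwise via the linear
identification of ℍ(ℂ) with ℂ⁴) satisfies `(∂f/∂z₁) e₂ = (∂f/∂z₂) e₁` on Ω;
equivalently it is right-ψ-hyperholomorphic with `ψ₁ = e₂, ψ₂ = -e₁`. -/
theorem left_BC_hyperholomorphic_satisfies_CR
    (Ω : Set (ℂ × ℂ)) (hΩ : IsOpen Ω)
    (f : Fin 4 → ℂ × ℂ → ℂ) (hf : ∀ k, DifferentiableOn ℂ (f k) Ω)
    (F : ℂ × ℂ → ℍ[ℂ]) (hF : ∀ p, F p = ∑ k, f k p • ee k)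
    (fl : ℂ × ℂ → ℍ[ℂ])
    (hfl : ∀ p ∈ Ω, ∀ h1 h2 : ℂ,
      Filter.Tendsto
        (fun ε : ℂ => QuaternionAlgebra.equivTuple (-1 : ℂ) (0 : ℂ) (-1 : ℂ)
          (ε⁻¹ • (F (p.1 + ε * h1, p.2 + ε * h2) - F p)))
        (nhdsWithin 0 {(0 : ℂ)}ᶜ)
        (nhds (QuaternionAlgebra.equivTuple (-1 : ℂ) (0 : ℂ) (-1 : ℂ)
          (fl p * (h1 • ee 0 + h2 • ee 1))))) :
    ∀ p ∈ Ω,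
      (∑ k, pda (f k) p • ee k) * ee 1 = (∑ k, pdb (f k) p • ee k) * ee 0 ∧
      (∑ k, pda (f k) p • ee k) * ee 1 + (∑ k, pdb (f k) p • ee k) * (-(ee 0)) = 0 := by
  intro p hp
  have k1 := key_tendsto Ω hΩ f hf F hF p hp 1 0
  have k2 := key_tendsto Ω hΩ f hf F hF p hp 0 1
  have u1 := tendsto_nhds_unique k1 (hfl p hp 1 0)
  have u2 := tendsto_nhds_unique k2 (hfl p hp 0 1)
  have e1 := (QuaternionAlgebra.equivTuple (-1 : ℂ) (0 : ℂ) (-1 : ℂ)).injective u1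
  have e2 := (QuaternionAlgebra.equivTuple (-1 : ℂ) (0 : ℂ) (-1 : ℂ)).injective u2
  have z1 : ((0 : ℂ) • ee 1 : ℍ[ℂ]) = 0 := zero_smul ℂ (ee 1)
  have z0 : ((0 : ℂ) • ee 0 : ℍ[ℂ]) = 0 := zero_smul ℂ (ee 0)
  rw [one_smul, z1, add_zero] at e1
  rw [one_smul, z0, zero_add] at e2
  have D1 : (∑ k, pda (f k) p • ee k) = fl p * ee 0 := e1
  have D2 : (∑ k, pdb (f k) p • ee k) = fl p * ee 1 := e2
  rw [D1, D2]
  constructor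
  · rw [mul_assoc, mul_assoc, ee_mul_01, ee_mul_10]
  · rw [mul_assoc, mul_assoc, ee_mul_01, ee_mul_neg10, mul_zero]
    simp
end
end
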